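/- Let M_θ ∈ Rₙ^∞ ⊗̄ B(E) be a multi-analytic operator with ‖M_θ‖ ≤ 1, and define Δ(M_θ) ∈ B(E) by ⟨Δ(M_θ)x, x⟩ := inf { ⟨(I − M_θ*M_θ)(x − p), x − p⟩ : p ∈ F²(Hₙ) ⊗ E, p(0) = 0 }. If Δ(M_θ) = 0, then M_θ is an extreme point of the closed unit ball of Rₙ^∞ ⊗̄ B(E). -/

import Mathlib

open scoped InnerProductSpace

/-- In the Fock model `F ≅ F²(Hₙ) ⊗ E`, let `M` be a multi-analytic
contraction with `Δ(M) = 0` (the Szegő infimum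
`inf { ⟨(I − M*M)(x − p), x − p⟩ : p with p(0) = 0 }` vanishes for every `x ∈ E`).
Then `M` is an extreme point of the unit ball of the multi-analytic operators
(no two distinct multi-analytic contractions average to `M`). -/
theorem stmt_12 {F E : Type*}
    [NormedAddCommGroup F] [InnerProductSpace ℂ F] [CompleteSpace F]
    [NormedAddCommGroup E] [InnerProductSpace ℂ E] [CompleteSpace E]
    {n : ℕ} (S : Fin n → F →L[ℂ] F)
    (hSiso : ∀ i (x : F), ‖S i x‖ = ‖x‖)
    (hSorth : ∀ i j, i ≠ j → ContinuousLinearMap.adjoint (S i) ∘L S j = 0)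
    (Sw : List (Fin n) → F →L[ℂ] F) (hSw_nil : Sw [] = 1)
    (hSw_cons : ∀ i w, Sw (i :: w) = S i ∘L Sw w)
    (J : E →L[ℂ] F) (hJiso : ∀ h, ‖J h‖ = ‖h‖)
    (hJwand : LinearMap.range (J : E →ₗ[ℂ] F)
        = ⨅ i, LinearMap.ker (ContinuousLinearMap.adjoint (S i) : F →ₗ[ℂ] F))
    (hJspan : (Submodule.span ℂ
        (⋃ w : List (Fin n), Set.range fun h : E => Sw w (J h))).topologicalClosure = ⊤)
    (M : F →L[ℂ] F) (hM : ∀ i, M ∘L S i = S i ∘L M) (hMnorm : ‖M‖ ≤ 1)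
    (hΔ0 : ∀ x : E, ∀ ε : ℝ, 0 < ε → ∃ p ∈ Submodule.span ℂ
        (⋃ w : List (Fin n), ⋃ (_ : w ≠ []), Set.range fun h : E => Sw w (J h)),
      (⟪((1 : F →L[ℂ] F) - ContinuousLinearMap.adjoint M ∘L M) (J x - p),
          J x - p⟫_ℂ).re < ε) :
    ∀ X Y : F →L[ℂ] F, (∀ i, X ∘L S i = S i ∘L X) → (∀ i, Y ∘L S i = S i ∘L Y) →
      ‖X‖ ≤ 1 → ‖Y‖ ≤ 1 → M = (2 : ℂ)⁻¹ • (X + Y) → X = Y := by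
  intro X Y hX hY hXn hYn hMXY
  -- Basic facts about S as isometries
  have hinner : ∀ i (u v : F), ⟪S i u, S i v⟫_ℂ = ⟪u, v⟫_ℂ := by
    intro i u v
    exact (LinearIsometry.inner_map_map ⟨(S i : F →ₗ[ℂ] F), hSiso i⟩ u v)
  have hSij : ∀ i j, i ≠ j → ∀ (u v : F), ⟪S i u, S j v⟫_ℂ = 0 := by
    intro i j hij u v
    have h1 : ⟪u, ContinuousLinearMap.adjoint (S i) (S j v)⟫_ℂ = ⟪S i u, S j v⟫_ℂ :=
      ContinuousLinearMap.adjoint_inner_right (S i) u (S j v)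
    have h2 : ContinuousLinearMap.adjoint (S i) (S j v)
        = (ContinuousLinearMap.adjoint (S i) ∘L S j) v := rfl
    rw [← h1, h2, hSorth i j hij]
    simp
  -- J lands in the kernel of each adjoint
  have hJker : ∀ (i : Fin n) (h : E), ContinuousLinearMap.adjoint (S i) (J h) = 0 := by
    intro i h
    have hmem : J h ∈ LinearMap.range (J : E →ₗ[ℂ] F) := ⟨h, rfl⟩
    rw [hJwand] at hmem
    exact (Submodule.mem_iInf _).1 hmem i
  have horth2 : ∀ (i : Fin n) (z : F) (h : E), ⟪J h, S i z⟫_ℂ = 0 := by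
    intro i z h
    rw [← ContinuousLinearMap.adjoint_inner_left (S i) z (J h), hJker i h]
    simp
  have horth : ∀ (i : Fin n) (z : F) (h : E), ⟪S i z, J h⟫_ℂ = 0 := by
    intro i z h
    rw [← inner_conj_symm, horth2]
    simp
  -- Sw norm preservation
  have hSwnorm : ∀ (w : List (Fin n)) (v : F), ‖Sw w v‖ = ‖v‖ := by
    intro w
    induction w with
    | nil => intro v; rw [hSw_nil]; simp
    | cons i w ih =>
      intro v
      rw [hSw_cons]
      simp only [ContinuousLinearMap.comp_apply, hSiso]
      exact ih v
  -- Sw concatenation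
  have hSwapp : ∀ (a b : List (Fin n)) (v : F), Sw (a ++ b) v = Sw a (Sw b v) := by
    intro a
    induction a with
    | nil => intro b v; rw [hSw_nil]; simp
    | cons i a ih => intro b v
                     rw [List.cons_append, hSw_cons, hSw_cons]
                     simp only [ContinuousLinearMap.comp_apply, ih]
  -- Inner products between Sw's: prefix case
  have hpref : ∀ (a b : List (Fin n)) (u v : F), a <+: b →
      ⟪Sw a u, Sw b v⟫_ℂ = ⟪u, Sw (b.drop a.length) v⟫_ℂ := by
    intro a
    induction a with
    | nil => intro b u v _; rw [hSw_nil]; simp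
    | cons i a ih =>
      intro b u v hp
      match b with
      | [] => exact absurd hp.length_le (by simp)
      | j :: b =>
        obtain ⟨hij, hp'⟩ := List.cons_prefix_cons.1 hp
        subst hij
        rw [hSw_cons, hSw_cons]
        simp only [ContinuousLinearMap.comp_apply]
        rw [hinner]
        rw [ih b u v hp']
        simp
  -- orthogonality when neither is a prefix of the other
  have hnopref : ∀ (a b : List (Fin n)) (u v : F), ¬ a <+: b → ¬ b <+: a →
      ⟪Sw a u, Sw b v⟫_ℂ = 0 := by
    intro a
    induction a with
    | nil => intro b u v hab _; exact absurd (List.nil_prefix) hab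
    | cons i a ih =>
      intro b u v hab hba
      match b with
      | [] => exact absurd (List.nil_prefix) hba
      | j :: b =>
        rw [hSw_cons, hSw_cons]
        simp only [ContinuousLinearMap.comp_apply]
        by_cases hij : i = j
        · subst hij
          rw [hinner]
          exact ih b _ _ (fun h => hab (List.cons_prefix_cons.2 ⟨rfl, h⟩))
            (fun h => hba (List.cons_prefix_cons.2 ⟨rfl, h⟩))
        · exact hSij i j hij _ _
  -- the difference operator
  set A : F →L[ℂ] F := X - M with hAdef
  have hMA1 : M + A = X := by rw [hAdef]; abel
  have h2M : M + M = X + Y := by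
    rw [hMXY, ← two_smul ℂ (((2:ℂ)⁻¹ • (X + Y)) : F →L[ℂ] F), smul_smul]
    norm_num
  have hMA2 : M - A = Y := by
    rw [hAdef]
    have : M - (X - M) = (M + M) - X := by abel
    rw [this, h2M]
    abel
  -- A commutes with each S i and hence with Sw
  have hA : ∀ i (v : F), A (S i v) = S i (A v) := by
    intro i v
    have : A ∘L S i = S i ∘L A := by
      rw [hAdef, ContinuousLinearMap.sub_comp, ContinuousLinearMap.comp_sub, hX i, hM i]
    calc A (S i v) = (A ∘L S i) v := rfl
      _ = (S i ∘L A) v := by rw [this]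
      _ = S i (A v) := rfl
  have hASw : ∀ (w : List (Fin n)) (v : F), A (Sw w v) = Sw w (A v) := by
    intro w
    induction w with
    | nil => intro v; rw [hSw_nil]; simp
    | cons i w ih =>
      intro v
      rw [hSw_cons]
      simp only [ContinuousLinearMap.comp_apply]
      rw [hA, ih]
  -- key inequality : ‖A v‖² ≤ Re⟪(1 - M*M)v, v⟫
  have hAle : ∀ v : F, ‖A v‖ * ‖A v‖ ≤
      (⟪((1 : F →L[ℂ] F) - ContinuousLinearMap.adjoint M ∘L M) v, v⟫_ℂ).re := by
    intro v
    have hpar := parallelogram_law_with_norm ℂ (M v) (A v)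
    have hXv : ‖M v + A v‖ ≤ ‖v‖ := by
      have : M v + A v = X v := by rw [← hMA1]; simp
      rw [this]
      calc ‖X v‖ ≤ ‖X‖ * ‖v‖ := X.le_opNorm v
        _ ≤ 1 * ‖v‖ := by gcongr
        _ = ‖v‖ := one_mul _
    have hYv : ‖M v - A v‖ ≤ ‖v‖ := by
      have : M v - A v = Y v := by rw [← hMA2]; simp
      rw [this]
      calc ‖Y v‖ ≤ ‖Y‖ * ‖v‖ := Y.le_opNorm v
        _ ≤ 1 * ‖v‖ := by gcongr
        _ = ‖v‖ := one_mul _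
    have hre : (⟪((1 : F →L[ℂ] F) - ContinuousLinearMap.adjoint M ∘L M) v, v⟫_ℂ).re
        = ‖v‖ * ‖v‖ - ‖M v‖ * ‖M v‖ := by
      have h1 : ((1 : F →L[ℂ] F) - ContinuousLinearMap.adjoint M ∘L M) v
          = v - ContinuousLinearMap.adjoint M (M v) := rfl
      rw [h1, inner_sub_left, ContinuousLinearMap.adjoint_inner_left]
      have h2 : (⟪v, v⟫_ℂ).re = ‖v‖ ^ 2 := by
        have := inner_self_eq_norm_sq (𝕜 := ℂ) v
        simpa using this
      have h3 : (⟪M v, M v⟫_ℂ).re = ‖M v‖ ^ 2 := by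
        have := inner_self_eq_norm_sq (𝕜 := ℂ) (M v)
        simpa using this
      simp only [Complex.sub_re, h2, h3]
      ring
    rw [hre]
    nlinarith [norm_nonneg (M v + A v), norm_nonneg (M v - A v), norm_nonneg v]
  -- main orthogonality: A (J x) ⟂ Sw w (J y) for all words w
  have key : ∀ w : List (Fin n),
      (∀ v : List (Fin n), v.length < w.length → ∀ x y : E, ⟪A (J x), Sw v (J y)⟫_ℂ = 0) →
      ∀ x y : E, ⟪A (J x), Sw w (J y)⟫_ℂ = 0 := by
    intro w IH x y
    -- A p is orthogonal to Sw w (J y) for p in the zero-constant-term span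
    have hApzero : ∀ p ∈ Submodule.span ℂ
        (⋃ w' : List (Fin n), ⋃ (_ : w' ≠ []), Set.range fun h : E => Sw w' (J h)),
        ⟪A p, Sw w (J y)⟫_ℂ = 0 := by
      intro p hp
      induction hp using Submodule.span_induction with
      | mem q hq =>
        simp only [Set.mem_iUnion, Set.mem_range] at hq
        obtain ⟨w', hw', h, rfl⟩ := hq
        rw [hASw]
        by_cases hp1 : w' <+: w
        · rw [hpref w' w _ _ hp1]
          apply IH
          rw [List.length_drop]
          have h1 : 0 < w'.length := List.length_pos_iff.2 hw'
          have h2 : w'.length ≤ w.length := hp1.length_le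
          omega
        · by_cases hp2 : w <+: w'
          · -- w' = w ++ t with t ≠ []
            have : ⟪Sw w (J y), Sw w' (A (J h))⟫_ℂ
                = ⟪J y, Sw (w'.drop w.length) (A (J h))⟫_ℂ := hpref w w' _ _ hp2
            rw [← inner_conj_symm, this]
            have htne : w'.drop w.length ≠ [] := by
              intro hnil
              have : (w'.drop w.length).length = w'.length - w.length := List.length_drop
              rw [hnil] at this
              simp at this
              have h2 : w.length ≤ w'.length := hp2.length_le
              have : w' = w := by
                obtain ⟨t, rfl⟩ := hp2
                have : t.length = 0 := by
                  have : (w ++ t).length = w.length + t.length := List.length_append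
                  omega
                simp [List.length_eq_zero_iff.1 this]
              exact hp1 (this ▸ List.prefix_refl w')
            match hde : w'.drop w.length, htne with
            | i :: t, _ =>
              rw [hSw_cons]
              simp only [ContinuousLinearMap.comp_apply]
              rw [horth2]
              simp
          · rw [← inner_conj_symm, hnopref w w' _ _ hp2 hp1]
            simp
      | zero => simp
      | add q r _ _ hq hr => rw [map_add, inner_add_left, hq, hr, add_zero]
      | smul c q _ hq => rw [map_smul, inner_smul_left, hq, mul_zero]
    -- now the ε-argument
    set c : ℂ := ⟪A (J x), Sw w (J y)⟫_ℂ with hc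
    have hbound : ∀ ε : ℝ, 0 < ε → ‖c‖ * ‖c‖ ≤ ε * (‖y‖ * ‖y‖ + 1) := by
      intro ε hε
      obtain ⟨p, hpmem, hpε⟩ := hΔ0 x ε hε
      have h1 : ‖A (J x - p)‖ * ‖A (J x - p)‖ < ε :=
        lt_of_le_of_lt (hAle (J x - p)) hpε
      have h2 : c = ⟪A (J x) - A p, Sw w (J y)⟫_ℂ := by
        rw [inner_sub_left, hApzero p hpmem, sub_zero]
      have h3 : ‖c‖ ≤ ‖A (J x - p)‖ * ‖y‖ := by
        rw [h2, ← map_sub]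
        calc ‖⟪A (J x - p), Sw w (J y)⟫_ℂ‖ ≤ ‖A (J x - p)‖ * ‖Sw w (J y)‖ :=
              norm_inner_le_norm _ _
          _ = ‖A (J x - p)‖ * ‖y‖ := by rw [hSwnorm, hJiso]
      nlinarith [norm_nonneg c, norm_nonneg (A (J x - p)), norm_nonneg y]
    by_contra hcne
    have hcpos : 0 < ‖c‖ * ‖c‖ := by
      have : 0 < ‖c‖ := norm_pos_iff.2 hcne
      positivity
    have hKpos : (0:ℝ) < ‖y‖ * ‖y‖ + 1 := by positivity
    have hb := hbound (‖c‖ * ‖c‖ / (2 * (‖y‖ * ‖y‖ + 1))) (by positivity)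
    have heq : (‖c‖ * ‖c‖ / (2 * (‖y‖ * ‖y‖ + 1))) * (‖y‖ * ‖y‖ + 1) = ‖c‖ * ‖c‖ / 2 := by
      field_simp
    rw [heq] at hb
    linarith
  have main : ∀ (w : List (Fin n)) (x y : E), ⟪A (J x), Sw w (J y)⟫_ℂ = 0 := by
    have H : ∀ N : ℕ, ∀ w : List (Fin n), w.length < N →
        ∀ x y : E, ⟪A (J x), Sw w (J y)⟫_ℂ = 0 := by
      intro N
      induction N with
      | zero => intro w h; omega
      | succ N IHN =>
        intro w hw x y
        exact key w (fun v hv x' y' => IHN v (by omega) x' y') x y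
    intro w x y
    exact H (w.length + 1) w (by omega) x y
  -- hence A (J x) = 0 for all x
  have hAJ : ∀ x : E, A (J x) = 0 := by
    intro x
    have hker : (Submodule.span ℂ
        (⋃ w : List (Fin n), Set.range fun h : E => Sw w (J h))).topologicalClosure
        ≤ LinearMap.ker (innerSL ℂ (A (J x)) : F →ₗ[ℂ] ℂ) := by
      apply Submodule.topologicalClosure_minimal
      · rw [Submodule.span_le]
        intro u hu
        simp only [Set.mem_iUnion, Set.mem_range] at hu
        obtain ⟨w, h, rfl⟩ := hu
        simp only [SetLike.mem_coe, LinearMap.mem_ker, ContinuousLinearMap.coe_coe, innerSL_apply_apply]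
        exact main w x h
      · exact ContinuousLinearMap.isClosed_ker _
    rw [hJspan] at hker
    have : A (J x) ∈ LinearMap.ker (innerSL ℂ (A (J x)) : F →ₗ[ℂ] ℂ) := hker trivial
    have hself : ⟪A (J x), A (J x)⟫_ℂ = 0 := this
    exact inner_self_eq_zero.1 hself
  -- hence A = 0
  have hA0 : A = 0 := by
    have hker : (Submodule.span ℂ
        (⋃ w : List (Fin n), Set.range fun h : E => Sw w (J h))).topologicalClosure
        ≤ LinearMap.ker (A : F →ₗ[ℂ] F) := by
      apply Submodule.topologicalClosure_minimal
      · rw [Submodule.span_le]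
        intro u hu
        simp only [Set.mem_iUnion, Set.mem_range] at hu
        obtain ⟨w, h, rfl⟩ := hu
        simp only [SetLike.mem_coe, LinearMap.mem_ker, ContinuousLinearMap.coe_coe]
        rw [hASw, hAJ, map_zero]
      · exact ContinuousLinearMap.isClosed_ker _
    rw [hJspan] at hker
    ext v
    have : A v = 0 := hker (trivial : v ∈ (⊤ : Submodule ℂ F))
    simpa using this
  have hXM : X = M := by
    have : X - M = 0 := hA0
    linear_combination (norm := abel) this
  have hYM : Y = M := by
    have : M - A = Y := hMA2
    rw [hA0, sub_zero] at this
    exact this.symm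
  rw [hXM, hYM]
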